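/- Let L > 0, N ≥ 1, Δ > 0, κ ≤ 0, and step sizes h_i ∈ (0,1]. Define U = √(2LΔ / ∑_{i=0}^{N-1} h_i(2 - h_i(-κ)/(1-κ))), and the one-dimensional piecewise-quadratic function f built from quadratic pieces of curvature alternating between μ = κL and L as in the tightness construction (pieces: (L/2)(x + U/L)² - U²/(2L) on (-∞, x_N]; (μ/2)(x-x_{i+1})² + U(x-x_{i+1}) + f_{i+1} on [x_{i+1}, x̄_i]; (L/2)(x-x_i)² + U(x-x_i) + f_i on [x̄_i, x_i]; and (L/2)(x-x₀)² + U(x-x₀) + f₀ on [x₀,∞)), where x_i = (U/L)∑_{j=i}^{N-1} h_j, f_i = Δ - (U²/(2L))∑_{j=0}^{i-1} h_j(2 - h_j(-κ)/(1-κ)), and x̄_i = x_i - ((-κ)/(1-κ))(h_i/L)U. Then f is continuously differentiable, f(x_i) = f_i, f'(x_i) = U for all i = 0,…,N, and the gradient iteration x_{i+1} = x_i - (h_i/L)f'(x_i) holds; consequently min_i |f'(x_i)|² = U² = 2L(f(x₀)-f(x_N)) / ∑_{i=0}^{N-1} h_i(2 - h_i(-κ)/(1-κ)), showing the short-step rate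 is tight. -/

import Mathlib

private lemma quad_hasDerivAt (A B C x0 y : ℝ) :
    HasDerivAt (fun z => A / 2 * (z - x0) ^ 2 + B * (z - x0) + C) (A * (y - x0) + B) y := by
  have h1 : HasDerivAt (fun z : ℝ => z - x0) 1 y := (hasDerivAt_id y).sub_const x0
  have h2 := (((h1.pow 2).const_mul (A / 2)).add (h1.const_mul B)).add_const C
  exact h2.congr_deriv (by ring)

private lemma eqOn_Icc_of_hasDerivAt {F Q g : ℝ → ℝ} {a b : ℝ}
    (hF : ∀ y ∈ Set.Icc a b, HasDerivAt F (g y) y)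
    (hQ : ∀ y ∈ Set.Icc a b, HasDerivAt Q (g y) y)
    (ha : F a = Q a) : ∀ y ∈ Set.Icc a b, F y = Q y :=
  eq_of_has_deriv_right_eq
    (fun x hx => (hF x (Set.Ico_subset_Icc_self hx)).hasDerivWithinAt)
    (fun x hx => (hQ x (Set.Ico_subset_Icc_self hx)).hasDerivWithinAt)
    (fun x hx => (hF x hx).continuousAt.continuousWithinAt)
    (fun x hx => (hQ x hx).continuousAt.continuousWithinAt) ha

set_option maxHeartbeats 1000000 in
theorem stmt_15 (L Δ κ : ℝ) (μ : ℝ) (N : ℕ) (h : ℕ → ℝ)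
    (hL : 0 < L) (hΔ : 0 < Δ) (hκ : κ ≤ 0) (hμ : μ = κ * L) (hN : 1 ≤ N)
    (hh : ∀ i < N, h i ∈ Set.Ioc (0:ℝ) 1)
    (U : ℝ)
    (hU : U = Real.sqrt (2 * L * Δ /
      ∑ i ∈ Finset.range N, h i * (2 - h i * (-κ) / (1 - κ))))
    (xseq fval xbar : ℕ → ℝ)
    (hx : ∀ i, xseq i = (U / L) * ∑ j ∈ Finset.Ico i N, h j)
    (hfv : ∀ i, fval i = Δ - (U ^ 2 / (2 * L)) *
      ∑ j ∈ Finset.range i, h j * (2 - h j * (-κ) / (1 - κ)))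
    (hxb : ∀ i, xbar i = xseq i - ((-κ) / (1 - κ)) * (h i / L) * U) :
    ∃ f : ℝ → ℝ,
      -- the piecewise-quadratic formulas
      (∀ y : ℝ, y ≤ xseq N →
        f y = L / 2 * (y + U / L) ^ 2 - U ^ 2 / (2 * L)) ∧
      (∀ i < N, ∀ y ∈ Set.Icc (xseq (i + 1)) (xbar i),
        f y = μ / 2 * (y - xseq (i + 1)) ^ 2 + U * (y - xseq (i + 1)) + fval (i + 1)) ∧
      (∀ i < N, ∀ y ∈ Set.Icc (xbar i) (xseq i),
        f y = L / 2 * (y - xseq i) ^ 2 + U * (y - xseq i) + fval i) ∧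
      (∀ y : ℝ, xseq 0 ≤ y →
        f y = L / 2 * (y - xseq 0) ^ 2 + U * (y - xseq 0) + fval 0) ∧
      -- regularity and interpolation
      ContDiff ℝ 1 f ∧
      (∀ i ≤ N, f (xseq i) = fval i ∧ deriv f (xseq i) = U) ∧
      -- gradient iteration
      (∀ i < N, xseq (i + 1) = xseq i - (h i / L) * deriv f (xseq i)) ∧
      -- tightness of the short-step rate
      (Finset.range (N + 1)).inf' (by simp) (fun i => (deriv f (xseq i)) ^ 2) = U ^ 2 ∧
      U ^ 2 = 2 * L * (f (xseq 0) - f (xseq N)) /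
        ∑ i ∈ Finset.range N, h i * (2 - h i * (-κ) / (1 - κ)) := by
  have h1κ : (0:ℝ) < 1 - κ := by linarith
  have hL' : L ≠ 0 := hL.ne'
  have hμ0 : μ ≤ 0 := by nlinarith
  have ht0 : 0 ≤ -κ / (1 - κ) := div_nonneg (by linarith) h1κ.le
  have ht1 : -κ / (1 - κ) < 1 := (div_lt_one h1κ).mpr (by linarith)
  have hterm : ∀ i < N, 0 < h i * (2 - h i * (-κ) / (1 - κ)) := by
    intro i hi
    obtain ⟨h0, h1'⟩ := hh i hi
    have h2 : h i * (-κ) / (1 - κ) ≤ -κ / (1 - κ) := by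
      apply div_le_div_of_nonneg_right _ h1κ.le
      nlinarith
    have := h2.trans_lt ht1
    nlinarith
  have hSpos : 0 < ∑ i ∈ Finset.range N, h i * (2 - h i * (-κ) / (1 - κ)) :=
    Finset.sum_pos (fun i hi => hterm i (Finset.mem_range.mp hi))
      (Finset.nonempty_range_iff.mpr (by omega))
  have hU2 : U ^ 2 = 2 * L * Δ /
      ∑ i ∈ Finset.range N, h i * (2 - h i * (-κ) / (1 - κ)) := by
    rw [hU]; exact Real.sq_sqrt (by positivity)
  have hUpos : 0 < U := by
    rw [hU]; exact Real.sqrt_pos.mpr (by positivity)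
  have hxN : xseq N = 0 := by rw [hx]; simp
  have hstep : ∀ i < N, xseq i = (U / L) * h i + xseq (i + 1) := by
    intro i hi
    rw [hx, hx, Finset.sum_eq_sum_Ico_succ_bot hi]
    ring
  have hxnn : ∀ i, 0 ≤ xseq i := by
    intro i
    rw [hx]
    refine mul_nonneg (by positivity) (Finset.sum_nonneg fun j hj => ?_)
    exact (hh j (Finset.mem_Ico.mp hj).2).1.le
  have hanti : ∀ i j, i ≤ j → xseq j ≤ xseq i := by
    intro i j hij
    rw [hx, hx]
    refine mul_le_mul_of_nonneg_left ?_ (by positivity)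
    refine Finset.sum_le_sum_of_subset_of_nonneg (Finset.Ico_subset_Ico hij le_rfl) ?_
    intro k hk _
    exact (hh k (Finset.mem_Ico.mp hk).2).1.le
  have hxb2 : ∀ i < N, xbar i ≤ xseq i := by
    intro i hi
    have h0 := (hh i hi).1
    have : 0 ≤ (-κ / (1 - κ)) * (h i / L) * U :=
      mul_nonneg (mul_nonneg ht0 (by positivity)) hUpos.le
    rw [hxb]; linarith
  have hxb1 : ∀ i < N, xseq (i + 1) ≤ xbar i := by
    intro i hi
    have h0 := (hh i hi).1
    have key : (-κ / (1 - κ)) * (h i / L) * U ≤ (U / L) * h i := by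
      calc (-κ / (1 - κ)) * (h i / L) * U ≤ 1 * (h i / L) * U := by
            refine mul_le_mul_of_nonneg_right
              (mul_le_mul_of_nonneg_right ht1.le (by positivity)) hUpos.le
        _ = (U / L) * h i := by ring
    rw [hxb, hstep i hi]; linarith
  have hcross : ∀ i < N, μ * (xbar i - xseq (i + 1)) = L * (xbar i - xseq i) := by
    intro i hi
    rw [hxb, hstep i hi, hμ]
    field_simp
    ring
  set G : ℝ → ℝ := fun y => U + L * min y 0 + L * max (y - xseq 0) 0 +
      ∑ i ∈ Finset.range N,
        min 0 (max (μ * (y - xseq (i + 1))) (L * (y - xseq i))) with hG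
  have hGcont : Continuous G := by
    rw [hG]
    refine (((continuous_const.add
      (continuous_const.mul (continuous_id.min continuous_const))).add
      (continuous_const.mul ((continuous_id.sub continuous_const).max continuous_const))).add ?_)
    refine continuous_finset_sum _ fun i _ => ?_
    exact continuous_const.min
      ((continuous_const.mul (continuous_id.sub continuous_const)).max
        (continuous_const.mul (continuous_id.sub continuous_const)))
  have hGA : ∀ y ≤ (0:ℝ), G y = L * y + U := by
    intro y hy
    have h1 : max (y - xseq 0) 0 = 0 := max_eq_right (by linarith [hxnn 0])
    have hsum : (∑ i ∈ Finset.range N,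
        min 0 (max (μ * (y - xseq (i + 1))) (L * (y - xseq i)))) = 0 := by
      refine Finset.sum_eq_zero fun i _ => ?_
      refine min_eq_left (le_max_of_le_left ?_)
      have h8 := hxnn (i + 1)
      have h9 : 0 ≤ (-μ) * (xseq (i + 1) - y) := mul_nonneg (by linarith) (by linarith)
      nlinarith [h9]
    rw [hG]
    simp only
    rw [min_eq_left hy, h1, hsum]
    ring
  have hGD : ∀ y, xseq 0 ≤ y → G y = L * (y - xseq 0) + U := by
    intro y hy
    have h0 : 0 ≤ y := (hxnn 0).trans hy
    have hsum : (∑ i ∈ Finset.range N,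
        min 0 (max (μ * (y - xseq (i + 1))) (L * (y - xseq i)))) = 0 := by
      refine Finset.sum_eq_zero fun i _ => ?_
      refine min_eq_left (le_max_of_le_right ?_)
      have := hanti 0 i (Nat.zero_le i)
      exact mul_nonneg hL.le (by linarith)
    rw [hG]
    simp only
    rw [min_eq_right h0, max_eq_left (by linarith), hsum]
    ring
  have htooth0 : ∀ i < N, ∀ y : ℝ, xseq (i + 1) ≤ y → y ≤ xseq i →
      ∀ j ∈ Finset.range N, j ≠ i →
      min 0 (max (μ * (y - xseq (j + 1))) (L * (y - xseq j))) = 0 := by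
    intro i hi y hy1 hy2 j _ hji
    rcases lt_or_gt_of_ne hji with hlt | hgt
    · have hj1 : xseq i ≤ xseq (j + 1) := hanti (j + 1) i hlt
      refine min_eq_left (le_max_of_le_left ?_)
      have h9 : 0 ≤ (-μ) * (xseq (j + 1) - y) := mul_nonneg (by linarith) (by linarith)
      nlinarith [h9]
    · have hj1 : xseq j ≤ xseq (i + 1) := hanti (i + 1) j hgt
      refine min_eq_left (le_max_of_le_right ?_)
      exact mul_nonneg hL.le (by linarith)
  have hGB : ∀ i < N, ∀ y ∈ Set.Icc (xseq (i + 1)) (xbar i),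
      G y = μ * (y - xseq (i + 1)) + U := by
    intro i hi y hy
    obtain ⟨hy1, hy2⟩ := hy
    have hyi : y ≤ xseq i := hy2.trans (hxb2 i hi)
    have hy0 : 0 ≤ y := (hxnn (i + 1)).trans hy1
    have hy00 : y ≤ xseq 0 := hyi.trans (hanti 0 i (Nat.zero_le i))
    have hA : L * (y - xseq i) ≤ μ * (y - xseq (i + 1)) := by
      have hc := hcross i hi
      have hprod : 0 ≤ (L - μ) * (xbar i - y) :=
        mul_nonneg (by linarith) (by linarith)
      have key : μ * (y - xseq (i + 1)) - L * (y - xseq i) = (L - μ) * (xbar i - y) := by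
        linear_combination hc
      linarith
    have hμneg : μ * (y - xseq (i + 1)) ≤ 0 :=
      mul_nonpos_of_nonpos_of_nonneg hμ0 (by linarith)
    rw [hG]
    simp only
    rw [min_eq_right hy0, max_eq_right (by linarith),
      Finset.sum_eq_single_of_mem i (Finset.mem_range.mpr hi)
        (htooth0 i hi y hy1 hyi),
      max_eq_left hA, min_eq_right hμneg]
    ring
  have hGC : ∀ i < N, ∀ y ∈ Set.Icc (xbar i) (xseq i),
      G y = L * (y - xseq i) + U := by
    intro i hi y hy
    obtain ⟨hy1, hy2⟩ := hy
    have hyi : xseq (i + 1) ≤ y := (hxb1 i hi).trans hy1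
    have hy0 : 0 ≤ y := (hxnn (i + 1)).trans hyi
    have hy00 : y ≤ xseq 0 := hy2.trans (hanti 0 i (Nat.zero_le i))
    have hA : μ * (y - xseq (i + 1)) ≤ L * (y - xseq i) := by
      have hc := hcross i hi
      have hprod : 0 ≤ (L - μ) * (y - xbar i) :=
        mul_nonneg (by linarith) (by linarith)
      have key : L * (y - xseq i) - μ * (y - xseq (i + 1)) = (L - μ) * (y - xbar i) := by
        linear_combination -hc
      linarith
    have hLneg : L * (y - xseq i) ≤ 0 :=
      mul_nonpos_of_nonneg_of_nonpos hL.le (by linarith)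
    rw [hG]
    simp only
    rw [min_eq_right hy0, max_eq_right (by linarith),
      Finset.sum_eq_single_of_mem i (Finset.mem_range.mpr hi)
        (htooth0 i hi y hyi hy2),
      max_eq_right hA, min_eq_right hLneg]
    ring
  -- the function
  set f : ℝ → ℝ := fun x => ∫ t in (0:ℝ)..x, G t with hf
  have hfd : ∀ y, HasDerivAt f (G y) y := fun y =>
    (hGcont.integral_hasStrictDerivAt 0 y).hasDerivAt
  have hfderiv : deriv f = G := funext fun y => (hfd y).deriv
  have hf0 : f 0 = 0 := by rw [hf]; simp
  have hfvalN : fval N = 0 := by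
    have hSne := hSpos.ne'
    rw [hfv N, hU2]
    generalize hSg : (∑ i ∈ Finset.range N, h i * (2 - h i * -κ / (1 - κ))) = S at hSne ⊢
    field_simp
    ring
  have hfval0 : fval 0 = Δ := by rw [hfv]; simp
  -- region 1 formula
  have region1 : ∀ y : ℝ, y ≤ xseq N →
      f y = L / 2 * (y + U / L) ^ 2 - U ^ 2 / (2 * L) := by
    intro y hy
    rw [hxN] at hy
    have hcongr : f y = ∫ t in (0:ℝ)..y, (L * t + U) := by
      rw [hf]
      refine intervalIntegral.integral_congr fun t ht => ?_
      rw [Set.uIcc_of_ge hy] at ht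
      exact hGA t ht.2
    have hi1 : IntervalIntegrable (fun t : ℝ => L * t) MeasureTheory.volume 0 y :=
      (continuous_const.mul continuous_id').intervalIntegrable 0 y
    rw [hcongr, intervalIntegral.integral_add hi1 intervalIntegrable_const,
      intervalIntegral.integral_const_mul, integral_id,
      intervalIntegral.integral_const]
    simp only [smul_eq_mul]
    field_simp
    ring
  -- the inductive step
  have step : ∀ i < N, f (xseq (i + 1)) = fval (i + 1) →
      (∀ y ∈ Set.Icc (xseq (i + 1)) (xbar i),
        f y = μ / 2 * (y - xseq (i + 1)) ^ 2 + U * (y - xseq (i + 1)) + fval (i + 1)) ∧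
      (∀ y ∈ Set.Icc (xbar i) (xseq i),
        f y = L / 2 * (y - xseq i) ^ 2 + U * (y - xseq i) + fval i) := by
    intro i hi hfv1
    have e2 : ∀ y ∈ Set.Icc (xseq (i + 1)) (xbar i),
        f y = μ / 2 * (y - xseq (i + 1)) ^ 2 + U * (y - xseq (i + 1)) + fval (i + 1) := by
      refine eqOn_Icc_of_hasDerivAt (g := G) (fun y _ => hfd y) ?_ ?_
      · intro y hy
        have hq := quad_hasDerivAt μ U (fval (i + 1)) (xseq (i + 1)) y
        rw [hGB i hi y hy]
        exact hq
      · rw [hfv1]; ring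
    have hbar : f (xbar i) =
        L / 2 * (xbar i - xseq i) ^ 2 + U * (xbar i - xseq i) + fval i := by
      rw [e2 (xbar i) ⟨hxb1 i hi, le_rfl⟩]
      have hfdiff : fval i = fval (i + 1) +
          (U ^ 2 / (2 * L)) * (h i * (2 - h i * (-κ) / (1 - κ))) := by
        rw [hfv i, hfv (i + 1), Finset.sum_range_succ]
        ring
      rw [hfdiff, hxb i, hstep i hi, hμ]
      field_simp
      ring
    have e3 : ∀ y ∈ Set.Icc (xbar i) (xseq i),
        f y = L / 2 * (y - xseq i) ^ 2 + U * (y - xseq i) + fval i := by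
      refine eqOn_Icc_of_hasDerivAt (g := G) (fun y _ => hfd y) ?_ hbar
      intro y hy
      have hq := quad_hasDerivAt L U (fval i) (xseq i) y
      rw [hGC i hi y hy]
      exact hq
    exact ⟨e2, e3⟩
  have keyval : ∀ k, k ≤ N → f (xseq (N - k)) = fval (N - k) := by
    intro k
    induction k with
    | zero =>
      intro _
      simp only [Nat.sub_zero]
      rw [hxN, hf0, hfvalN]
    | succ k ih =>
      intro hk
      have hiN : N - (k + 1) < N := by omega
      have hsucc : N - (k + 1) + 1 = N - k := by omega
      have hprev : f (xseq (N - (k + 1) + 1)) = fval (N - (k + 1) + 1) := by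
        rw [hsucc]; exact ih (by omega)
      have h3 := (step (N - (k + 1)) hiN hprev).2 (xseq (N - (k + 1)))
        ⟨hxb2 _ hiN, le_rfl⟩
      rw [h3]; ring
  have fvalx : ∀ i ≤ N, f (xseq i) = fval i := by
    intro i hi
    have := keyval (N - i) (by omega)
    rwa [Nat.sub_sub_self hi] at this
  have derivU : ∀ i ≤ N, G (xseq i) = U := by
    intro i hi
    rcases eq_or_lt_of_le hi with rfl | hlt
    · rw [hxN, hGA 0 le_rfl]; ring
    · rw [hGC i hlt (xseq i) ⟨hxb2 i hlt, le_rfl⟩]; ring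
  refine ⟨f, region1, ?_, ?_, ?_, ?_, ?_, ?_, ?_, ?_⟩
  · intro i hi y hy
    exact (step i hi (fvalx (i + 1) (by omega))).1 y hy
  · intro i hi y hy
    exact (step i hi (fvalx (i + 1) (by omega))).2 y hy
  · intro y hy
    have e4 : ∀ z ∈ Set.Icc (xseq 0) y,
        f z = L / 2 * (z - xseq 0) ^ 2 + U * (z - xseq 0) + fval 0 := by
      refine eqOn_Icc_of_hasDerivAt (g := G) (fun z _ => hfd z) ?_ ?_
      · intro z hz
        have hq := quad_hasDerivAt L U (fval 0) (xseq 0) z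
        rw [hGD z hz.1]
        exact hq
      · rw [fvalx 0 (by omega)]; ring
    exact e4 y ⟨hy, le_rfl⟩
  · exact contDiff_one_iff_deriv.mpr
      ⟨fun y => (hfd y).differentiableAt, by rw [hfderiv]; exact hGcont⟩
  · intro i hi
    exact ⟨fvalx i hi, by rw [hfderiv]; exact derivU i hi⟩
  · intro i hi
    rw [hfderiv, derivU i hi.le, hstep i hi]
    ring
  · have hcongr : ∀ j ∈ Finset.range (N + 1),
        (deriv f (xseq j)) ^ 2 = (fun _ : ℕ => U ^ 2) j := by
      intro j hj
      rw [hfderiv, derivU j (Nat.lt_succ_iff.mp (Finset.mem_range.mp hj))]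
    rw [Finset.inf'_congr _ rfl hcongr, Finset.inf'_const]
  · rw [fvalx 0 (by omega), fvalx N le_rfl, hfvalN, hfval0, sub_zero]
    exact hU2
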